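/- For a prime integer p, the natural symmetries of the torus give the equalities d_{1,p} = d_{p,1} = d_{p_{(0,1)}}, and d_{p_{(k,1)}} = d_{p_{(p−k,1)}} for every k with 1 ≤ k ≤ p−1, where all counts are taken among period knot (p,p)-mosaics. -/

import Mathlib

/-- Connection point on the left edge, for each of the eleven mosaic tiles `T_0, …, T_10`. -/
def cpL : Fin 11 → Bool := ![false, true, false, false, true, true, false, true, true, true, true]
/-- Connection point on the right edge. -/
def cpR : Fin 11 → Bool := ![false, false, true, true, false, true, false, true, true, true, true]
/-- Connection point on the top edge. -/
def cpT : Fin 11 → Bool := ![false, false, false, true, true, false, true, true, true, true, true]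
/-- Connection point on the bottom edge. -/
def cpB : Fin 11 → Bool := ![false, true, true, false, false, false, true, true, true, true, true]

/-- An `(m,n)`-mosaic: an `m × n` matrix of mosaic tiles (row `i`, column `j`). -/
abbrev Mosaic (m n : ℕ) := Fin m → Fin n → Fin 11

/-- Suitably connected: contiguous tiles agree about connection points on their common edge. -/
def SuitablyConnected {m n : ℕ} (M : Mosaic m n) : Prop :=
  (∀ (i : Fin m) (j : Fin n) (h : j.val + 1 < n),
      cpR (M i j) = cpL (M i ⟨j.val + 1, h⟩)) ∧
  (∀ (i : Fin m) (h : i.val + 1 < m) (j : Fin n),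
      cpB (M i j) = cpT (M ⟨i.val + 1, h⟩ j))

/-- Suitably ∂-connected: tiles on opposite ends of a row (resp. column) agree about
connection points on the outer boundary edges. -/
def SuitablyBdryConnected {m n : ℕ} (M : Mosaic m n) : Prop :=
  (∀ (i : Fin m) (j j' : Fin n), j.val = 0 → j'.val = n - 1 →
      cpL (M i j) = cpR (M i j')) ∧
  (∀ (i i' : Fin m) (j : Fin n), i.val = 0 → i'.val = m - 1 →
      cpT (M i j) = cpB (M i' j))

/-- A period knot `(m,n)`-mosaic. -/
def PeriodKnot {m n : ℕ} (M : Mosaic m n) : Prop :=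
  SuitablyConnected M ∧ SuitablyBdryConnected M

/-- `D_P^{(m,n)}`, the number of period knot `(m,n)`-mosaics. -/
noncomputable def DP (m n : ℕ) : ℕ := Nat.card {M : Mosaic m n // PeriodKnot M}

/-- No connection points on the boundary of the mosaic. -/
def BoundaryFree {m n : ℕ} (M : Mosaic m n) : Prop :=
  ∀ (i : Fin m) (j : Fin n),
    (j.val = 0 → cpL (M i j) = false) ∧ (j.val = n - 1 → cpR (M i j) = false) ∧
    (i.val = 0 → cpT (M i j) = false) ∧ (i.val = m - 1 → cpB (M i j) = false)

/-- `D^{(m,n)}`, the number of knot `(m,n)`-mosaics. -/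
noncomputable def DK (m n : ℕ) : ℕ :=
  Nat.card {M : Mosaic m n // SuitablyConnected M ∧ BoundaryFree M}

/-- Subtract `x` from the index `i`, modulo `m`. -/
def shiftIdx {m : ℕ} (x : ℤ) (i : Fin m) : Fin m :=
  ⟨(((i : ℤ) - x) % (m : ℤ)).toNat, by
    have hm : (0 : ℤ) < (m : ℤ) := by exact_mod_cast i.pos
    have h1 := Int.emod_lt_of_pos ((i : ℤ) - x) hm
    have h2 := Int.emod_nonneg ((i : ℤ) - x) (by omega : (m : ℤ) ≠ 0)
    omega⟩

/-- The cyclic rotation `t_{x,y}`: `(t_{x,y} M)_{i,j} = M_{i-x, j-y}` (indices mod `m`, `n`). -/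
def tshift {m n : ℕ} (x y : ℤ) (M : Mosaic m n) : Mosaic m n :=
  fun i j => M (shiftIdx x i) (shiftIdx y j)

/-- `M` is a `(p,q)`-f.period mosaic: `p` is the least positive integer with `M = t_{p,0}(M)`
and `q` is the least positive integer with `M = t_{0,q}(M)`. -/
def IsFPeriod {m n : ℕ} (p q : ℕ) (M : Mosaic m n) : Prop :=
  IsLeast {a : ℕ | 0 < a ∧ M = tshift (a : ℤ) 0 M} p ∧
  IsLeast {b : ℕ | 0 < b ∧ M = tshift 0 (b : ℤ) M} q

/-- `d_{p,q}`: the number of `(p,q)`-f.period knot `(m,n)`-mosaics. -/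
noncomputable def dFP (m n p q : ℕ) : ℕ :=
  Nat.card {M : Mosaic m n // PeriodKnot M ∧ IsFPeriod p q M}

/-- Equivalence of period knot mosaics under cyclic rotations of rows and columns. -/
def torRel (m n : ℕ) (A B : {M : Mosaic m n // PeriodKnot M}) : Prop :=
  ∃ x y : ℤ, tshift x y A.val = B.val

/-- `D_T^{(m,n)}`, the number of toroidal knot `(m,n)`-mosaics. -/
noncomputable def DT (m n : ℕ) : ℕ := Nat.card (Quot (torRel m n))

/-- `M` is a `p_{(k,1)}`-f.period knot `(p,p)`-mosaic: not `(1,1)`-f.period and `M = t_{k,1}(M)`. -/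
def IsPk1FPeriod {p : ℕ} (k : ℕ) (M : Mosaic p p) : Prop :=
  ¬ IsFPeriod 1 1 M ∧ M = tshift (k : ℤ) 1 M

/-- `d_{p_{(k,1)}}`: the number of `p_{(k,1)}`-f.period knot `(p,p)`-mosaics. -/
noncomputable def dPk (p k : ℕ) : ℕ :=
  Nat.card {M : Mosaic p p // PeriodKnot M ∧ IsPk1FPeriod k M}

/-- `d_{p²}`: the number of period knot `(p,p)`-mosaics that are not `(1,1)`-, not `(1,p)`-
and not `p_{(k,1)}`-f.period for any `k`. -/
noncomputable def dPsq (p : ℕ) : ℕ :=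
  Nat.card {M : Mosaic p p // PeriodKnot M ∧ ¬ IsFPeriod 1 1 M ∧ ¬ IsFPeriod 1 p M ∧
    ∀ k < p, ¬ IsPk1FPeriod k M}

/-- Entries of the pair `(X_k, O_k)` of `2^k × 2^k` matrices defined by the block recursion
`X_{k+1} = [[X_k, O_k], [O_k, X_k]]`, `O_{k+1} = [[O_k, X_k], [X_k, 4 O_k]]`,
seeded with `X_0 = O_0 = [1]` (the most significant bit selects the block). -/
def matsXO : ℕ → ℕ → ℕ → ℕ × ℕ
  | 0, _, _ => (1, 1)
  | k + 1, i, j =>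
    let v := matsXO k (i % 2 ^ k) (j % 2 ^ k)
    if i / 2 ^ k % 2 = 0 then
      if j / 2 ^ k % 2 = 0 then (v.1, v.2) else (v.2, v.1)
    else
      if j / 2 ^ k % 2 = 0 then (v.2, v.1) else (v.1, 4 * v.2)

/-- The matrix `X_k`. -/
def Xmat (m : ℕ) : Matrix (Fin (2 ^ m)) (Fin (2 ^ m)) ℕ :=
  Matrix.of fun i j => (matsXO m i j).1

/-- The matrix `O_k`. -/
def Omat (m : ℕ) : Matrix (Fin (2 ^ m)) (Fin (2 ^ m)) ℕ :=
  Matrix.of fun i j => (matsXO m i j).2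

/-- Entries of the quadruple `(X_k^+, X_k^-, O_k^+, O_k^-)` of `2^k × 2^k` matrices defined by
the block recursions `X_{k+1}^+ = [[X_k^+, O_k^-],[O_k^-, X_k^+]]`,
`X_{k+1}^- = [[X_k^-, O_k^+],[O_k^+, X_k^-]]`, `O_{k+1}^+ = [[O_k^+, X_k^-],[X_k^-, 4 O_k^+]]`,
`O_{k+1}^- = [[O_k^-, X_k^+],[X_k^+, 4 O_k^-]]`, seeded with `X_0^+ = O_0^+ = [1]`,
`X_0^- = O_0^- = [0]` (the most significant bit selects the block). -/
def matsPM : ℕ → ℕ → ℕ → ℕ × ℕ × ℕ × ℕ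
  | 0, _, _ => (1, 0, 1, 0)
  | k + 1, i, j =>
    let v := matsPM k (i % 2 ^ k) (j % 2 ^ k)
    match v with
    | (xp, xm, op, om) =>
      if i / 2 ^ k % 2 = 0 then
        if j / 2 ^ k % 2 = 0 then (xp, xm, op, om) else (om, op, xm, xp)
      else
        if j / 2 ^ k % 2 = 0 then (om, op, xm, xp) else (xp, xm, 4 * op, 4 * om)

/-- The matrix `X_m^+`. -/
def Xplus (m : ℕ) : Matrix (Fin (2 ^ m)) (Fin (2 ^ m)) ℕ :=
  Matrix.of fun i j => (matsPM m i j).1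
/-- The matrix `X_m^-`. -/
def Xminus (m : ℕ) : Matrix (Fin (2 ^ m)) (Fin (2 ^ m)) ℕ :=
  Matrix.of fun i j => (matsPM m i j).2.1
/-- The matrix `O_m^+`. -/
def Oplus (m : ℕ) : Matrix (Fin (2 ^ m)) (Fin (2 ^ m)) ℕ :=
  Matrix.of fun i j => (matsPM m i j).2.2.1
/-- The matrix `O_m^-`. -/
def Ominus (m : ℕ) : Matrix (Fin (2 ^ m)) (Fin (2 ^ m)) ℕ :=
  Matrix.of fun i j => (matsPM m i j).2.2.2

/-- The boundary state (a word in `{o,x}^m`) encoded by `a : Fin (2^m)` in reverse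
lexicographic order: the first position is the least significant bit. -/
def stateOf {m : ℕ} (a : Fin (2 ^ m)) : Fin m → Bool := fun r => (a : ℕ).testBit r.val

/-- The `l`-state of a mosaic. -/
def lState {m n : ℕ} (hn : 0 < n) (M : Mosaic m n) : Fin m → Bool :=
  fun i => cpL (M i ⟨0, hn⟩)
/-- The `r`-state of a mosaic. -/
def rState {m n : ℕ} (hn : 0 < n) (M : Mosaic m n) : Fin m → Bool :=
  fun i => cpR (M i ⟨n - 1, Nat.sub_lt hn Nat.one_pos⟩)
/-- The `t`-state of a mosaic. -/
def tState {m n : ℕ} (hm : 0 < m) (M : Mosaic m n) : Fin n → Bool :=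
  fun j => cpT (M ⟨0, hm⟩ j)
/-- The `b`-state of a mosaic. -/
def bState {m n : ℕ} (hm : 0 < m) (M : Mosaic m n) : Fin n → Bool :=
  fun j => cpB (M ⟨m - 1, Nat.sub_lt hm Nat.one_pos⟩ j)

/-- The state matrix `N^{(m,n)+}`: its `(a,b)` entry counts the suitably connected
`(m,n)`-mosaics whose `t`-state equals its `b`-state, whose `l`-state is the `a`-th state
and whose `r`-state is the `b`-th state. -/
noncomputable def Nplus (m n : ℕ) (hm : 0 < m) (hn : 0 < n) :
    Matrix (Fin (2 ^ m)) (Fin (2 ^ m)) ℕ :=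
  Matrix.of fun a b => Nat.card {M : Mosaic m n // SuitablyConnected M ∧
    tState hm M = bState hm M ∧ lState hn M = stateOf a ∧ rState hn M = stateOf b}

/-- The index map `α` for `tr^{(k)}`: cyclic shift by `k` positions of the `p`-bit binary
representation, i.e. `α(i) ≡ 2^k i (mod 2^p - 1)` for `0 < i < 2^p - 1`, `α(0) = 0`,
`α(2^p-1) = 2^p-1`. -/
def alphaIdx (p k : ℕ) (i : Fin (2 ^ p)) : Fin (2 ^ p) :=
  if h : (i : ℕ) = 2 ^ p - 1 then i
  else ⟨(2 ^ k * (i : ℕ)) % (2 ^ p - 1), by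
    have h1 : 0 < 2 ^ p := Nat.two_pow_pos p
    have h2 : (i : ℕ) < 2 ^ p := i.isLt
    have h3 : 0 < 2 ^ p - 1 := by omega
    have h4 := Nat.mod_lt (2 ^ k * (i : ℕ)) h3
    omega⟩

/-- The twisted trace `tr^{(k)}(A) = Σ_i A_{i+1, α(i)+1}`. -/
def trk (p k : ℕ) (A : Matrix (Fin (2 ^ p)) (Fin (2 ^ p)) ℕ) : ℕ :=
  ∑ i, A i (alphaIdx p k i)

/-! ### Auxiliary lemmas for the proof -/

lemma shiftIdx_congr' {m : ℕ} {x y : ℤ} (h : x % m = y % m) (i : Fin m) :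
    shiftIdx x i = shiftIdx y i := by
  apply Fin.ext
  have : ((i : ℤ) - x) % m = ((i : ℤ) - y) % m := by
    rw [Int.sub_emod, h, ← Int.sub_emod]
  simp [shiftIdx, this]

lemma shiftIdx_shiftIdx {m : ℕ} (x y : ℤ) (i : Fin m) :
    shiftIdx x (shiftIdx y i) = shiftIdx (x + y) i := by
  apply Fin.ext
  have hm : (0 : ℤ) < m := by exact_mod_cast i.pos
  simp only [shiftIdx]
  rw [Int.toNat_of_nonneg (Int.emod_nonneg _ (by omega))]
  congr 1
  have h2 : (i : ℤ) - (x + y) = ((i : ℤ) - y) - x := by ring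
  rw [h2, Int.sub_emod (((i:ℤ) - y) % m) x, Int.emod_emod_of_dvd _ dvd_rfl,
    ← Int.sub_emod]

lemma shiftIdx_zero {m : ℕ} (i : Fin m) : shiftIdx 0 i = i := by
  apply Fin.ext
  simp only [shiftIdx, sub_zero]
  rw [Int.emod_eq_of_lt (by positivity) (by exact_mod_cast i.isLt)]
  simp

lemma tshift_tshift {m n : ℕ} (x y x' y' : ℤ) (M : Mosaic m n) :
    tshift x y (tshift x' y' M) = tshift (x + x') (y + y') M := by
  funext i j
  simp only [tshift, shiftIdx_shiftIdx]
  rw [add_comm x' x, add_comm y' y]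

lemma tshift_zero {m n : ℕ} (M : Mosaic m n) : tshift 0 0 M = M := by
  funext i j
  simp [tshift, shiftIdx_zero]

lemma tshift_congr {m n : ℕ} {x x' y y' : ℤ} (hx : x % m = x' % m)
    (hy : y % n = y' % n) (M : Mosaic m n) : tshift x y M = tshift x' y' M := by
  funext i j
  simp [tshift, shiftIdx_congr' hx, shiftIdx_congr' hy]

lemma fixed_add {m n : ℕ} {M : Mosaic m n} {x y x' y' : ℤ}
    (h : M = tshift x y M) (h' : M = tshift x' y' M) :
    M = tshift (x + x') (y + y') M := by
  calc M = tshift x y M := h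
    _ = tshift x y (tshift x' y' M) := by rw [← h']
    _ = tshift (x + x') (y + y') M := tshift_tshift _ _ _ _ _

lemma fixed_neg {m n : ℕ} {M : Mosaic m n} {x y : ℤ}
    (h : M = tshift x y M) : M = tshift (-x) (-y) M := by
  have h2 : tshift (-x) (-y) M = tshift (-x) (-y) (tshift x y M) := by rw [← h]
  rw [tshift_tshift, neg_add_cancel, neg_add_cancel, tshift_zero] at h2
  exact h2.symm

lemma fixed_neg_iff {m n : ℕ} {M : Mosaic m n} {x y : ℤ} :
    M = tshift x y M ↔ M = tshift (-x) (-y) M :=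
  ⟨fixed_neg, fun h => by simpa using fixed_neg h⟩

lemma fixed_zsmul {m n : ℕ} {M : Mosaic m n} {x y : ℤ}
    (h : M = tshift x y M) (k : ℤ) : M = tshift (k * x) (k * y) M := by
  induction k using Int.induction_on with
  | zero => simpa using (tshift_zero M).symm
  | succ a ih =>
      have := fixed_add ih h
      have e1 : ((a : ℤ) + 1) * x = a * x + x := by ring
      have e2 : ((a : ℤ) + 1) * y = a * y + y := by ring
      rw [e1, e2]; exact this
  | pred a ih =>
      have := fixed_add ih (fixed_neg h)
      have e1 : (-(a : ℤ) - 1) * x = -a * x + -x := by ring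
      have e2 : (-(a : ℤ) - 1) * y = -a * y + -y := by ring
      rw [e1, e2]; exact this

lemma fixed_m {m n : ℕ} (M : Mosaic m n) : M = tshift (m : ℤ) 0 M := by
  rw [tshift_congr (x' := 0) (y' := 0) (by simp) rfl M, tshift_zero]

lemma row_period_one {p : ℕ} (hp : p.Prime) (M : Mosaic p p) (a : ℕ)
    (ha0 : 0 < a) (hap : a < p) (h : M = tshift (a : ℤ) 0 M) :
    M = tshift 1 0 M := by
  have hnd : ¬ (p ∣ a) := Nat.not_dvd_of_pos_of_lt ha0 hap
  have hcop : Nat.Coprime p a := (Nat.Prime.coprime_iff_not_dvd hp).mpr hnd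
  have hic : IsCoprime (p : ℤ) (a : ℤ) := by
    rw [Int.isCoprime_iff_gcd_eq_one]
    exact_mod_cast hcop
  obtain ⟨u, v, huv⟩ := hic
  have h1 : M = tshift (v * (a : ℤ)) 0 M := by simpa using fixed_zsmul h v
  have h2 : M = tshift (u * (p : ℤ)) 0 M := by simpa using fixed_zsmul (fixed_m M) u
  have h3 := fixed_add h2 h1
  rw [huv] at h3
  simpa using h3

lemma isFPeriod_one_one_iff {m n : ℕ} (M : Mosaic m n) :
    IsFPeriod 1 1 M ↔ (M = tshift 1 0 M ∧ M = tshift 0 1 M) := by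
  constructor
  · rintro ⟨⟨hr, _⟩, ⟨hc, _⟩⟩
    exact ⟨by simpa using hr.2, by simpa using hc.2⟩
  · rintro ⟨h1, h2⟩
    exact ⟨⟨⟨one_pos, by simpa using h1⟩, fun a ha => ha.1⟩,
      ⟨⟨one_pos, by simpa using h2⟩, fun a ha => ha.1⟩⟩

lemma isFPeriod_p_one_iff {p : ℕ} (hp : p.Prime) (M : Mosaic p p) :
    IsFPeriod p 1 M ↔ (M ≠ tshift 1 0 M ∧ M = tshift 0 1 M) := by
  constructor
  · rintro ⟨⟨_, hlb⟩, ⟨hc, _⟩⟩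
    refine ⟨fun h => ?_, by simpa using hc.2⟩
    have := hlb ⟨one_pos, by simpa using h⟩
    have := hp.two_le
    omega
  · rintro ⟨hne, hcol⟩
    constructor
    · constructor
      · exact ⟨hp.pos, by rw [← fixed_m M]⟩
      · intro a ha
        by_contra hlt
        push_neg at hlt
        exact hne (row_period_one hp M a ha.1 hlt ha.2)
    · exact ⟨⟨one_pos, by simpa using hcol⟩, fun a ha => ha.1⟩

lemma isPk0_iff {p : ℕ} (hp : p.Prime) (M : Mosaic p p) :
    IsPk1FPeriod 0 M ↔ IsFPeriod p 1 M := by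
  rw [IsPk1FPeriod, isFPeriod_one_one_iff, isFPeriod_p_one_iff hp]
  simp only [Nat.cast_zero]
  constructor
  · rintro ⟨h1, h2⟩
    exact ⟨fun h => h1 ⟨h, h2⟩, h2⟩
  · rintro ⟨h1, h2⟩
    exact ⟨fun h => h1 h.1, h2⟩

/-! ### Transpose symmetry -/

/-- Tile map under transposition (swap left↔top, right↔bottom). -/
def tauT : Fin 11 → Fin 11 := ![0, 3, 2, 1, 4, 6, 5, 7, 8, 9, 10]

lemma tauT_tauT : ∀ t, tauT (tauT t) = t := by decide
lemma cpL_tauT : ∀ t, cpL (tauT t) = cpT t := by decide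
lemma cpR_tauT : ∀ t, cpR (tauT t) = cpB t := by decide
lemma cpT_tauT : ∀ t, cpT (tauT t) = cpL t := by decide
lemma cpB_tauT : ∀ t, cpB (tauT t) = cpR t := by decide

/-- Transpose of a square mosaic. -/
def transp {p : ℕ} (M : Mosaic p p) : Mosaic p p := fun i j => tauT (M j i)

lemma transp_transp {p : ℕ} (M : Mosaic p p) : transp (transp M) = M := by
  funext i j; simp [transp, tauT_tauT]

lemma periodKnot_transp {p : ℕ} {M : Mosaic p p} (h : PeriodKnot M) :
    PeriodKnot (transp M) := by
  obtain ⟨⟨h1, h2⟩, ⟨h3, h4⟩⟩ := h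
  refine ⟨⟨fun i j hj => ?_, fun i hi j => ?_⟩, ⟨fun i j j' hj hj' => ?_, fun i i' j hi hi' => ?_⟩⟩
  · simp only [transp, cpR_tauT, cpL_tauT]
    exact h2 j hj i
  · simp only [transp, cpB_tauT, cpT_tauT]
    exact h1 j i hi
  · simp only [transp, cpL_tauT, cpR_tauT]
    exact h4 j j' i hj hj'
  · simp only [transp, cpT_tauT, cpB_tauT]
    exact h3 j i i' hi hi'

lemma tshift_transp {p : ℕ} (x y : ℤ) (M : Mosaic p p) :
    tshift x y (transp M) = transp (tshift y x M) := by
  funext i j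
  simp [tshift, transp]

lemma transp_eq_iff {p : ℕ} {M N : Mosaic p p} : transp M = transp N ↔ M = N :=
  ⟨fun h => by rw [← transp_transp M, h, transp_transp], fun h => by rw [h]⟩

lemma isFPeriod_transp {p : ℕ} (a b : ℕ) (M : Mosaic p p) :
    IsFPeriod a b (transp M) ↔ IsFPeriod b a M := by
  have hs1 : {c : ℕ | 0 < c ∧ transp M = tshift (c : ℤ) 0 (transp M)}
      = {c : ℕ | 0 < c ∧ M = tshift 0 (c : ℤ) M} := by
    ext c
    refine and_congr_right fun _ => ?_
    rw [tshift_transp]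
    exact ⟨fun h => transp_eq_iff.mp h, fun h => by rw [← h]⟩
  have hs2 : {c : ℕ | 0 < c ∧ transp M = tshift 0 (c : ℤ) (transp M)}
      = {c : ℕ | 0 < c ∧ M = tshift (c : ℤ) 0 M} := by
    ext c
    refine and_congr_right fun _ => ?_
    rw [tshift_transp]
    exact ⟨fun h => transp_eq_iff.mp h, fun h => by rw [← h]⟩
  unfold IsFPeriod
  rw [hs1, hs2, and_comm]

/-! ### Vertical flip symmetry -/

/-- Tile map under vertical flip (swap top↔bottom). -/
def sigV : Fin 11 → Fin 11 := ![0, 4, 3, 2, 1, 5, 6, 7, 8, 9, 10]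

lemma sigV_sigV : ∀ t, sigV (sigV t) = t := by decide
lemma cpL_sigV : ∀ t, cpL (sigV t) = cpL t := by decide
lemma cpR_sigV : ∀ t, cpR (sigV t) = cpR t := by decide
lemma cpT_sigV : ∀ t, cpT (sigV t) = cpB t := by decide
lemma cpB_sigV : ∀ t, cpB (sigV t) = cpT t := by decide

/-- Reverse an index. -/
def revI {p : ℕ} (i : Fin p) : Fin p := ⟨p - 1 - i.val, by have := i.isLt; omega⟩

/-- Flip a mosaic upside down. -/
def flipV {p : ℕ} (M : Mosaic p p) : Mosaic p p := fun i j => sigV (M (revI i) j)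

lemma revI_revI {p : ℕ} (i : Fin p) : revI (revI i) = i := by
  apply Fin.ext
  have := i.isLt
  simp only [revI]
  omega

lemma flipV_flipV {p : ℕ} (M : Mosaic p p) : flipV (flipV M) = M := by
  funext i j
  simp [flipV, revI_revI, sigV_sigV]

lemma flipV_eq_iff {p : ℕ} {M N : Mosaic p p} : flipV M = flipV N ↔ M = N :=
  ⟨fun h => by rw [← flipV_flipV M, h, flipV_flipV], fun h => by rw [h]⟩

lemma revI_shiftIdx {p : ℕ} (x : ℤ) (i : Fin p) :
    revI (shiftIdx x i) = shiftIdx (-x) (revI i) := by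
  apply Fin.ext
  have hp : (0 : ℤ) < p := by exact_mod_cast i.pos
  have hi : (i : ℕ) < p := i.isLt
  set r : ℤ := ((i : ℤ) - x) % p with hr
  have hr0 : 0 ≤ r := Int.emod_nonneg _ (by omega)
  have hr1 : r < p := Int.emod_lt_of_pos _ hp
  have hcast : ((revI i : Fin p) : ℤ) = (p : ℤ) - 1 - i := by
    simp only [revI]
    omega
  simp only [revI, shiftIdx, hr.symm]
  have hcast' : ((p - 1 - (i : ℕ) : ℕ) : ℤ) = (p : ℤ) - 1 - (i : ℤ) := by
    omega
  rw [hcast']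
  have hrr : r % p = r := by
    rw [hr]; exact Int.emod_emod_of_dvd _ dvd_rfl
  have key : ((p : ℤ) - 1 - (i : ℤ) - -x) % p = (p : ℤ) - 1 - r := by
    have e1 : (p : ℤ) - 1 - (i : ℤ) - -x = ((p : ℤ) - 1) - ((i : ℤ) - x) := by ring
    calc ((p : ℤ) - 1 - (i : ℤ) - -x) % p
        = (((p : ℤ) - 1) % p - ((i : ℤ) - x) % p) % p := by rw [e1, Int.sub_emod]
      _ = (((p : ℤ) - 1) % p - r % p) % p := by rw [hrr, ← hr]
      _ = (((p : ℤ) - 1) - r) % p := (Int.sub_emod _ _ _).symm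
      _ = (p : ℤ) - 1 - r := Int.emod_eq_of_lt (by omega) (by omega)
  rw [key]
  omega

lemma tshift_flipV {p : ℕ} (x y : ℤ) (M : Mosaic p p) :
    tshift x y (flipV M) = flipV (tshift (-x) y M) := by
  funext i j
  simp only [tshift, flipV, revI_shiftIdx]

lemma periodKnot_flipV {p : ℕ} {M : Mosaic p p} (h : PeriodKnot M) :
    PeriodKnot (flipV M) := by
  obtain ⟨⟨h1, h2⟩, ⟨h3, h4⟩⟩ := h
  refine ⟨⟨fun i j hj => ?_, fun i hi j => ?_⟩, ⟨fun i j j' hj hj' => ?_, fun i i' j hi hi' => ?_⟩⟩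
  · simp only [flipV, cpR_sigV, cpL_sigV]
    exact h1 (revI i) j hj
  · simp only [flipV, cpB_sigV, cpT_sigV]
    have hk : (revI (⟨i.val + 1, hi⟩ : Fin p)).val + 1 < p := by
      simp only [revI]; omega
    have := h2 (revI ⟨i.val + 1, hi⟩) hk j
    have hrev : (⟨(revI (⟨i.val + 1, hi⟩ : Fin p)).val + 1, hk⟩ : Fin p) = revI i := by
      apply Fin.ext
      have := i.isLt
      simp only [revI]
      omega
    rw [hrev] at this
    exact this.symm
  · simp only [flipV, cpL_sigV, cpR_sigV]
    exact h3 (revI i) j j' hj hj'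
  · simp only [flipV, cpT_sigV, cpB_sigV]
    have e1 : (revI i').val = 0 := by simp only [revI]; omega
    have e2 : (revI i).val = p - 1 := by
      have := i.isLt
      simp only [revI]; omega
    exact (h4 (revI i') (revI i) j e1 e2).symm

lemma fixed_flipV_iff {p : ℕ} {M : Mosaic p p} {x y : ℤ} :
    flipV M = tshift x y (flipV M) ↔ M = tshift (-x) y M := by
  rw [tshift_flipV, flipV_eq_iff]

lemma isFPeriod11_flipV_iff {p : ℕ} (M : Mosaic p p) :
    IsFPeriod 1 1 (flipV M) ↔ IsFPeriod 1 1 M := by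
  rw [isFPeriod_one_one_iff, isFPeriod_one_one_iff, fixed_flipV_iff, fixed_flipV_iff]
  rw [neg_zero]
  constructor
  · rintro ⟨ha, hb⟩
    refine ⟨?_, hb⟩
    have := fixed_neg ha
    simpa using this
  · rintro ⟨ha, hb⟩
    refine ⟨?_, hb⟩
    have := fixed_neg ha
    simpa using this

lemma pk_flipV {p : ℕ} {k : ℕ} (hk : k ≤ p) {M : Mosaic p p}
    (h : IsPk1FPeriod k M) : IsPk1FPeriod (p - k) (flipV M) := by
  obtain ⟨h1, h2⟩ := h
  constructor
  · rw [isFPeriod11_flipV_iff]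
    exact h1
  · rw [fixed_flipV_iff]
    have hcast : ((p - k : ℕ) : ℤ) = (p : ℤ) - k := by
      push_cast [hk]; ring
    rw [hcast]
    have hmod : (-((p : ℤ) - k)) % p = (k : ℤ) % p := by
      have e1 : -((p : ℤ) - k) = (k : ℤ) - p := by ring
      rw [e1, Int.sub_emod (k : ℤ) (p : ℤ), Int.emod_self, sub_zero,
        Int.emod_emod_of_dvd _ dvd_rfl]
    rw [tshift_congr hmod rfl M]
    exact h2

/-! ### The counting equivalences -/

/-- Transposition as an equivalence on `(1,p)`- vs `(p,1)`-f.period knot mosaics. -/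
def transpEquiv (p : ℕ) :
    {M : Mosaic p p // PeriodKnot M ∧ IsFPeriod 1 p M} ≃
    {M : Mosaic p p // PeriodKnot M ∧ IsFPeriod p 1 M} where
  toFun M := ⟨transp M.1, periodKnot_transp M.2.1, (isFPeriod_transp p 1 M.1).mpr M.2.2⟩
  invFun M := ⟨transp M.1, periodKnot_transp M.2.1, (isFPeriod_transp 1 p M.1).mpr M.2.2⟩
  left_inv M := Subtype.ext (transp_transp M.1)
  right_inv M := Subtype.ext (transp_transp M.1)

/-- Vertical flip as an equivalence between `p_{(k,1)}`- and `p_{(p-k,1)}`-f.period mosaics. -/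
def flipEquiv (p k : ℕ) (hk : k ≤ p) :
    {M : Mosaic p p // PeriodKnot M ∧ IsPk1FPeriod k M} ≃
    {M : Mosaic p p // PeriodKnot M ∧ IsPk1FPeriod (p - k) M} where
  toFun M := ⟨flipV M.1, periodKnot_flipV M.2.1, pk_flipV hk M.2.2⟩
  invFun M := ⟨flipV M.1, periodKnot_flipV M.2.1, by
    have := pk_flipV (Nat.sub_le p k) M.2.2
    rwa [Nat.sub_sub_self hk] at this⟩
  left_inv M := Subtype.ext (flipV_flipV M.1)
  right_inv M := Subtype.ext (flipV_flipV M.1)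

/-- For a prime `p`, the torus symmetries give `d_{1,p} = d_{p,1} = d_{p_{(0,1)}}`
and `d_{p_{(k,1)}} = d_{p_{(p-k,1)}}` for `1 ≤ k ≤ p-1` (counts among period knot
`(p,p)`-mosaics). -/
theorem fperiod_count_symmetries (p : ℕ) (hP : p.Prime) :
    dFP p p 1 p = dFP p p p 1 ∧ dFP p p p 1 = dPk p 0 ∧
    ∀ k : ℕ, 1 ≤ k → k ≤ p - 1 → dPk p k = dPk p (p - k) := by
  refine ⟨Nat.card_congr (transpEquiv p), ?_, fun k hk1 hk2 => ?_⟩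
  · refine Nat.card_congr (Equiv.subtypeEquivRight fun M => ?_)
    exact and_congr_right fun _ => (isPk0_iff hP M).symm
  · have hkp : k ≤ p := by have := hP.two_le; omega
    exact Nat.card_congr (flipEquiv p k hkp)
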